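/- Distinct input bit sequences of the same length produce disjoint final intervals in a binary arithmetic coder, provided all step probabilities lie in (0,1). -/
import Mathlib


def acStep (iv : ℝ × ℝ) (pb : ℝ × Bool) : ℝ × ℝ :=
  if pb.2 then (iv.1 + pb.1 * (iv.2 - iv.1), iv.2)
  else (iv.1, iv.1 + pb.1 * (iv.2 - iv.1))

def acEncode (l : List (ℝ × Bool)) : ℝ × ℝ := l.foldl acStep (0, 1)

lemma acStep_props (iv : ℝ × ℝ) (pb : ℝ × Bool) (h : iv.1 < iv.2)
    (hp : pb.1 ∈ Set.Ioo (0:ℝ) 1) :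
    (acStep iv pb).1 < (acStep iv pb).2 ∧ iv.1 ≤ (acStep iv pb).1 ∧ (acStep iv pb).2 ≤ iv.2 := by
  obtain ⟨hp0, hp1⟩ := hp
  unfold acStep
  cases hb : pb.2 <;> simp <;> constructor <;> nlinarith

lemma acFold_props (l : List (ℝ × Bool)) (iv : ℝ × ℝ) (h : iv.1 < iv.2)
    (hp : ∀ x ∈ l, x.1 ∈ Set.Ioo (0:ℝ) 1) :
    (l.foldl acStep iv).1 < (l.foldl acStep iv).2 ∧
    iv.1 ≤ (l.foldl acStep iv).1 ∧ (l.foldl acStep iv).2 ≤ iv.2 := by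
  induction l generalizing iv with
  | nil => exact ⟨h, le_refl _, le_refl _⟩
  | cons a l ih =>
    obtain ⟨h1, h2, h3⟩ := acStep_props iv a h (hp a (by simp))
    obtain ⟨g1, g2, g3⟩ := ih (acStep iv a) h1 (fun x hx => hp x (by simp [hx]))
    exact ⟨g1, le_trans h2 g2, le_trans g3 h3⟩

lemma acMain (p : List ℝ) (b b' : List Bool) (iv : ℝ × ℝ) (hiv : iv.1 < iv.2)
    (hb : p.length = b.length) (hb' : p.length = b'.length)
    (hp : ∀ x ∈ p, x ∈ Set.Ioo (0:ℝ) 1) (hne : b ≠ b') :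
    Disjoint (Set.Ico ((p.zip b).foldl acStep iv).1 ((p.zip b).foldl acStep iv).2)
             (Set.Ico ((p.zip b').foldl acStep iv).1 ((p.zip b').foldl acStep iv).2) := by
  induction p generalizing b b' iv with
  | nil =>
    cases b <;> cases b' <;> simp_all
  | cons q p ih =>
    cases b with
    | nil => simp at hb
    | cons c bs =>
      cases b' with
      | nil => simp at hb'
      | cons c' bs' =>
        have hq : q ∈ Set.Ioo (0:ℝ) 1 := hp q (by simp)
        have hp' : ∀ x ∈ p, x ∈ Set.Ioo (0:ℝ) 1 := fun x hx => hp x (by simp [hx])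
        by_cases hcc : c = c'
        · subst hcc
          have hne' : bs ≠ bs' := by simpa using hne
          simp only [List.zip_cons_cons, List.foldl_cons]
          exact ih bs bs' (acStep iv (q, c))
            (acStep_props iv (q, c) hiv hq).1
            (by simpa using hb) (by simpa using hb') hp' hne'
        · -- bits differ at head
          have hzip : ∀ (bs : List Bool), ∀ x ∈ p.zip bs, x.1 ∈ Set.Ioo (0:ℝ) 1 := by
            intro bs x hx
            exact hp' x.1 (List.of_mem_zip hx).1
          simp only [List.zip_cons_cons, List.foldl_cons]
          have key : ∀ (d : Bool) (bs : List Bool), d = false →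
              Set.Ico ((p.zip bs).foldl acStep (acStep iv (q, d))).1
                      ((p.zip bs).foldl acStep (acStep iv (q, d))).2 ⊆
              Set.Ico iv.1 (iv.1 + q * (iv.2 - iv.1)) := by
            intro d bs hd
            subst hd
            have h1 := acStep_props iv (q, false) hiv hq
            obtain ⟨_, g2, g3⟩ := acFold_props (p.zip bs) (acStep iv (q, false)) h1.1 (hzip bs)
            apply Set.Ico_subset_Ico
            · exact le_trans (by simp [acStep]) g2
            · exact le_trans g3 (by simp [acStep])
          have key' : ∀ (d : Bool) (bs : List Bool), d = true →
              Set.Ico ((p.zip bs).foldl acStep (acStep iv (q, d))).1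
                      ((p.zip bs).foldl acStep (acStep iv (q, d))).2 ⊆
              Set.Ico (iv.1 + q * (iv.2 - iv.1)) iv.2 := by
            intro d bs hd
            subst hd
            have h1 := acStep_props iv (q, true) hiv hq
            obtain ⟨_, g2, g3⟩ := acFold_props (p.zip bs) (acStep iv (q, true)) h1.1 (hzip bs)
            apply Set.Ico_subset_Ico
            · exact le_trans (by simp [acStep]) g2
            · exact le_trans g3 (by simp [acStep])
          have hdisj := @Set.Ico_disjoint_Ico_same _ _ iv.1 (iv.1 + q * (iv.2 - iv.1)) iv.2
          cases c <;> cases c'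
          · simp at hcc
          · exact hdisj.mono (key false bs rfl) (key' true bs' rfl)
          · exact hdisj.symm.mono (key' true bs rfl) (key false bs' rfl)
          · simp at hcc

theorem stmt_11 :
    ∀ (p : List ℝ) (b b' : List Bool),
      p.length = b.length → p.length = b'.length →
      (∀ x ∈ p, x ∈ Set.Ioo (0:ℝ) 1) → b ≠ b' →
      Disjoint (Set.Ico (acEncode (p.zip b)).1 (acEncode (p.zip b)).2)
               (Set.Ico (acEncode (p.zip b')).1 (acEncode (p.zip b')).2) := by
  intro p b b' hb hb' hp hne
  exact acMain p b b' (0, 1) (by norm_num) hb hb' hp hne
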